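/- If X is a perfect Polish space and perfect(X) holds, then perfect(ℕ^ℕ) holds. -/

import Mathlib

open Topology Set

section Transfer

variable {Y : Type*} [TopologicalSpace Y]

lemma nwd_image_val {T : Set Y} {N : Set T} (hN : IsNowhereDense N) :
    IsNowhereDense (Subtype.val '' N : Set Y) := by
  rw [IsNowhereDense, eq_empty_iff_forall_notMem]
  intro x hx
  set W := interior (closure (Subtype.val '' N)) with hW
  have hWopen : IsOpen W := isOpen_interior
  have hxc : x ∈ closure (Subtype.val '' N) := interior_subset hx
  rw [mem_closure_iff] at hxc
  obtain ⟨t, htW, ht⟩ := hxc W hWopen hx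
  obtain ⟨t₀, ht₀, rfl⟩ := ht
  have hsub : (Subtype.val ⁻¹' W : Set T) ⊆ closure N := by
    intro u hu
    rw [closure_subtype]
    exact interior_subset hu
  have : t₀ ∈ interior (closure N) :=
    interior_maximal hsub (hWopen.preimage continuous_subtype_val) htW
  rw [hN] at this
  exact this

lemma meagre_image_val {T : Set Y} {S : Set T} (hS : IsMeagre S) :
    IsMeagre (Subtype.val '' S : Set Y) := by
  rw [isMeagre_iff_countable_union_isNowhereDense] at hS ⊢
  obtain ⟨F, hnwd, hcnt, hsub⟩ := hS
  refine ⟨(Set.image Subtype.val) '' F, ?_, hcnt.image _, ?_⟩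
  · rintro t ⟨t₀, ht₀, rfl⟩
    exact nwd_image_val (hnwd _ ht₀)
  · rintro x ⟨x₀, hx₀, rfl⟩
    obtain ⟨t₀, ht₀, hx₀t⟩ := hsub hx₀
    exact ⟨Subtype.val '' t₀, ⟨t₀, ht₀, rfl⟩, ⟨x₀, hx₀t, rfl⟩⟩

/-- nonmeager in ambient implies nonmeager in any subspace containing the set -/
lemma nonmeagre_preimage_val {T S : Set Y} (hST : S ⊆ T) (hS : ¬ IsMeagre S) :
    ¬ IsMeagre (Subtype.val ⁻¹' S : Set T) := by
  intro h
  apply hS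
  have := meagre_image_val h
  rwa [Subtype.image_preimage_coe, inter_eq_self_of_subset_right hST] at this

lemma nwd_preimage_val_of_dense {D : Set Y} (hD : Dense D) {N : Set Y}
    (hN : IsNowhereDense N) : IsNowhereDense (Subtype.val ⁻¹' N : Set D) := by
  rw [IsNowhereDense, eq_empty_iff_forall_notMem]
  intro u hu
  obtain ⟨W, hWopen, hWeq⟩ := isOpen_induced_iff.mp
    (isOpen_interior (s := closure (Subtype.val ⁻¹' N : Set D)))
  rw [← hWeq] at hu
  have h1 : (Subtype.val ⁻¹' W : Set D) ⊆ Subtype.val ⁻¹' closure N := by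
    rw [hWeq]
    exact (interior_subset).trans
      (continuous_subtype_val.closure_preimage_subset N)
  have h2 : W ⊆ closure N := by
    by_contra hcon
    have hne : (W ∩ (closure N)ᶜ).Nonempty := by
      rw [inter_compl_nonempty_iff]; exact hcon
    obtain ⟨y, hyW, hyD⟩ := hD.inter_open_nonempty _ (hWopen.inter isClosed_closure.isOpen_compl) hne
    exact hyW.2 (h1 (show (⟨y, hyD⟩ : D) ∈ _ from hyW.1))
  have : (u : Y) ∈ interior (closure N) := interior_maximal h2 hWopen hu
  rw [hN] at this
  exact this

lemma meagre_preimage_val_of_dense {D : Set Y} (hD : Dense D) {S : Set Y}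
    (hS : IsMeagre S) : IsMeagre (Subtype.val ⁻¹' S : Set D) := by
  rw [isMeagre_iff_countable_union_isNowhereDense] at hS ⊢
  obtain ⟨F, hnwd, hcnt, hsub⟩ := hS
  refine ⟨(Set.preimage Subtype.val) '' F, ?_, hcnt.image _, ?_⟩
  · rintro t ⟨t₀, ht₀, rfl⟩
    exact nwd_preimage_val_of_dense hD (hnwd _ ht₀)
  · rintro x hx
    obtain ⟨t₀, ht₀, hxt⟩ := hsub hx
    exact ⟨Subtype.val ⁻¹' t₀, ⟨t₀, ht₀, rfl⟩, hxt⟩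

lemma nwd_image_homeomorph {Z : Type*} [TopologicalSpace Z] (e : Y ≃ₜ Z) {s : Set Y}
    (hs : IsNowhereDense s) : IsNowhereDense (e '' s) := by
  rw [IsNowhereDense, ← e.image_closure, ← e.image_interior, hs, image_empty]

lemma meagre_image_homeomorph {Z : Type*} [TopologicalSpace Z] (e : Y ≃ₜ Z) {s : Set Y}
    (hs : IsMeagre s) : IsMeagre (e '' s) := by
  rw [isMeagre_iff_countable_union_isNowhereDense] at hs ⊢
  obtain ⟨F, hnwd, hcnt, hsub⟩ := hs
  refine ⟨(Set.image e) '' F, ?_, hcnt.image _, ?_⟩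
  · rintro t ⟨t₀, ht₀, rfl⟩
    exact nwd_image_homeomorph e (hnwd _ ht₀)
  · rintro x ⟨x₀, hx₀, rfl⟩
    obtain ⟨t₀, ht₀, hx₀t⟩ := hsub hx₀
    exact ⟨e '' t₀, ⟨t₀, ht₀, rfl⟩, ⟨x₀, hx₀t, rfl⟩⟩

lemma meagre_singleton_of_acc [T1Space Y] {P : Set Y} (hP : Perfect P) (u : P) :
    IsNowhereDense ({u} : Set P) := by
  rw [IsClosed.isNowhereDense_iff isClosed_singleton, eq_empty_iff_forall_notMem]
  intro v hv
  obtain ⟨W, hWopen, hWeq⟩ := isOpen_induced_iff.mp (isOpen_interior (s := ({u} : Set P)))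
  have hvu : v ∈ ({u} : Set P) := interior_subset hv
  rw [mem_singleton_iff] at hvu
  subst hvu
  have hvW : v ∈ Subtype.val ⁻¹' W := by rw [hWeq]; exact hv
  obtain ⟨y, ⟨hyW, hyP⟩, hyne⟩ := accPt_iff_nhds.mp (hP.acc _ v.2) W (hWopen.mem_nhds hvW)
  have : (⟨y, hyP⟩ : P) ∈ interior ({v} : Set P) := by rw [← hWeq]; exact hyW
  have := interior_subset this
  rw [mem_singleton_iff] at this
  exact hyne (congrArg Subtype.val this)

lemma meagre_preimage_countable [T1Space Y] {P : Set Y} (hP : Perfect P) {C : Set Y}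
    (hC : C.Countable) : IsMeagre (Subtype.val ⁻¹' C : Set P) := by
  have hcnt : (Subtype.val ⁻¹' C : Set P).Countable := hC.preimage Subtype.val_injective
  rw [isMeagre_iff_countable_union_isNowhereDense]
  refine ⟨(fun u : P => ({u} : Set P)) '' (Subtype.val ⁻¹' C), ?_, hcnt.image _, ?_⟩
  · rintro t ⟨u, _, rfl⟩
    exact meagre_singleton_of_acc hP u
  · intro u hu
    exact ⟨{u}, ⟨u, hu, rfl⟩, rfl⟩

end Transfer


section Part2
variable {Z Y : Type*} [TopologicalSpace Z] [TopologicalSpace Y]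

/-- homeomorphism between a subtype and its image under an embedding -/
noncomputable def embHomeo {f : Z → Y} (hf : IsEmbedding f) (T : Set Z) :
    T ≃ₜ (f '' T : Set Y) :=
  (hf.comp IsEmbedding.subtypeVal).toHomeomorph.trans
    (Homeomorph.setCongr (by rw [Set.range_comp, Subtype.range_coe]))

lemma embHomeo_coe {f : Z → Y} (hf : IsEmbedding f) (T : Set Z) (u : T) :
    ((embHomeo hf T u : (f '' T : Set Y)) : Y) = f u := rfl

lemma meagre_emb_iff {f : Z → Y} (hf : IsEmbedding f) (T S : Set Z) :
    IsMeagre (Subtype.val ⁻¹' S : Set T) ↔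
      IsMeagre (Subtype.val ⁻¹' (f '' S) : Set (f '' T : Set Y)) := by
  have himg : (embHomeo hf T) '' (Subtype.val ⁻¹' S) =
      (Subtype.val ⁻¹' (f '' S) : Set (f '' T : Set Y)) := by
    ext v
    constructor
    · rintro ⟨u, hu, rfl⟩
      rw [mem_preimage, embHomeo_coe]
      exact ⟨u, hu, rfl⟩
    · intro hv
      rw [mem_preimage] at hv
      obtain ⟨z, hz, hfz⟩ := hv
      set u := (embHomeo hf T).symm v with hu
      have hcoe : f (u : Z) = (v : Y) := by
        have h2 := embHomeo_coe hf T u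
        rw [show (embHomeo hf T) u = v from Homeomorph.apply_symm_apply _ v] at h2
        exact h2.symm
      have hzu : z = (u : Z) := hf.injective (by rw [hfz, hcoe])
      refine ⟨u, ?_, by rw [hu, Homeomorph.apply_symm_apply]⟩
      rw [mem_preimage, ← hzu]
      exact hz
  constructor
  · intro h
    rw [← himg]
    exact meagre_image_homeomorph _ h
  · intro h
    rw [← himg] at h
    have := meagre_image_homeomorph (embHomeo hf T).symm h
    rwa [show ⇑(embHomeo hf T).symm = ⇑(embHomeo hf T).toEquiv.symm from rfl,
      show ⇑(embHomeo hf T) = ⇑(embHomeo hf T).toEquiv from rfl,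
      Equiv.symm_image_image] at this

lemma meagre_of_meagre_subtype {T S : Set Y} (hST : S ⊆ T)
    (h : IsMeagre (Subtype.val ⁻¹' S : Set T)) : IsMeagre S := by
  have := meagre_image_val h
  rwa [Subtype.image_preimage_coe, inter_eq_self_of_subset_right hST] at this

/-- up-transfer: meager in a smaller subspace implies meager in a bigger subspace -/
lemma meagre_up {S T P : Set Y} (hST : S ⊆ T) (hTP : T ⊆ P)
    (h : IsMeagre (Subtype.val ⁻¹' S : Set T)) :
    IsMeagre (Subtype.val ⁻¹' S : Set P) := by
  have hS' : (Subtype.val '' (Subtype.val ⁻¹' S : Set P)) = S := by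
    rw [Subtype.image_preimage_coe, inter_eq_self_of_subset_right (hST.trans hTP)]
  have hT' : (Subtype.val '' (Subtype.val ⁻¹' T : Set P)) = T := by
    rw [Subtype.image_preimage_coe, inter_eq_self_of_subset_right hTP]
  have key := (meagre_emb_iff (IsEmbedding.subtypeVal (p := (· ∈ P)))
    (Subtype.val ⁻¹' T) (Subtype.val ⁻¹' S)).mpr
  rw [hS', hT'] at key
  refine meagre_of_meagre_subtype (T := (Subtype.val ⁻¹' T : Set P)) (fun x hx => hST hx) (key h)

end Part2

def PerfectProp (X : Type*) [TopologicalSpace X] : Prop :=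
  ∀ A : Set X, ¬ IsMeagre A →
    ∃ P : Set X, IsNowhereDense P ∧ Perfect P ∧ P.Nonempty ∧
      ¬ IsMeagre ((↑) ⁻¹' A : Set P)

def CantorProp (X : Type*) [TopologicalSpace X] : Prop :=
  ∀ A : Set X, ¬ IsMeagre A →
    ∃ C : Set X, IsNowhereDense C ∧ Nonempty (C ≃ₜ (ℕ → Bool)) ∧
      ¬ IsMeagre ((↑) ⁻¹' A : Set C)


section Construction
variable {X : Type*} [MetricSpace X]

lemma exists_other_point (hperf : Preperfect (univ : Set X)) {O : Set X} (hO : IsOpen O)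
    {p : X} (hp : p ∈ O) : ∃ q ∈ O, q ≠ p := by
  obtain ⟨y, ⟨hy, -⟩, hne⟩ :=
    (accPt_iff_nhds (x := p) (C := univ)).mp (hperf p (mem_univ p)) O (hO.mem_nhds hp)
  exact ⟨y, hy, hne⟩

lemma step_ex (hperf : Preperfect (univ : Set X)) {O : Set X} (hO : IsOpen O)
    (hne : O.Nonempty) (dd : X) {ε : ℝ} (hε : 0 < ε) :
    ∃ pr : X × ℝ, 0 < pr.2 ∧ pr.2 ≤ ε ∧ Metric.closedBall pr.1 pr.2 ⊆ O ∧
      (O \ Metric.closedBall pr.1 pr.2).Nonempty ∧ (dd ∈ O → pr.1 = dd) := by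
  have main : ∀ p ∈ O, ∃ r : ℝ, 0 < r ∧ r ≤ ε ∧ Metric.closedBall p r ⊆ O ∧
      (O \ Metric.closedBall p r).Nonempty := by
    intro p hp
    obtain ⟨q, hq, hqp⟩ := exists_other_point hperf hO hp
    obtain ⟨s, hs, hsub⟩ := Metric.isOpen_iff.mp hO p hp
    have hdq : 0 < dist q p := dist_pos.mpr hqp
    refine ⟨min (min ε (dist q p / 2)) (s / 2), ?_, ?_, ?_, ⟨q, hq, ?_⟩⟩
    · positivity
    · exact le_trans (min_le_left _ _) (min_le_left _ _)
    · refine (Metric.closedBall_subset_ball ?_).trans hsub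
      exact lt_of_le_of_lt (min_le_right _ _) (by linarith)
    · intro hqball
      rw [Metric.mem_closedBall] at hqball
      have : dist q p ≤ dist q p / 2 :=
        hqball.trans (le_trans (min_le_left _ _) (min_le_right _ _))
      linarith
  by_cases hd : dd ∈ O
  · obtain ⟨r, h1, h2, h3, h4⟩ := main dd hd
    exact ⟨(dd, r), h1, h2, h3, h4, fun _ => rfl⟩
  · obtain ⟨p, hp⟩ := hne
    obtain ⟨r, h1, h2, h3, h4⟩ := main p hp
    exact ⟨(p, r), h1, h2, h3, h4, fun hdd => absurd hdd hd⟩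

variable (hperf : Preperfect (univ : Set X)) (d : ℕ → X) {ε : ℝ}

/-- the sequence of "remaining open sets" in the construction of a splitting family -/
noncomputable def stSeq (hperf : Preperfect (univ : Set X)) (d : ℕ → X)
    (U : Set X) (hU : IsOpen U) (hne : U.Nonempty) (hε : 0 < ε) :
    ℕ → {O : Set X // IsOpen O ∧ O ⊆ U ∧ O.Nonempty} := fun n =>
  Nat.rec ⟨U, hU, subset_rfl, hne⟩
    (fun m prev =>
      ⟨prev.1 \ closure (Metric.ball
          (step_ex hperf prev.2.1 prev.2.2.2 (d m) hε).choose.1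
          (step_ex hperf prev.2.1 prev.2.2.2 (d m) hε).choose.2),
        prev.2.1.sdiff isClosed_closure,
        diff_subset.trans prev.2.2.1,
        ((step_ex hperf prev.2.1 prev.2.2.2 (d m) hε).choose_spec.2.2.2.1).mono
          (diff_subset_diff_right Metric.closure_ball_subset_closedBall)⟩) n

variable (U : Set X) (hU : IsOpen U) (hne : U.Nonempty) (hε : 0 < ε)

/-- the chosen center-radius pairs -/
noncomputable def ctr (n : ℕ) : X × ℝ :=
  (step_ex hperf (stSeq hperf d U hU hne hε n).2.1
      (stSeq hperf d U hU hne hε n).2.2.2 (d n) hε).choose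

/-- the splitting family -/
noncomputable def Vfam (n : ℕ) : Set X :=
  Metric.ball (ctr hperf d U hU hne hε n).1 (ctr hperf d U hU hne hε n).2

lemma ctr_spec (n : ℕ) :
    0 < (ctr hperf d U hU hne hε n).2 ∧ (ctr hperf d U hU hne hε n).2 ≤ ε ∧
    Metric.closedBall (ctr hperf d U hU hne hε n).1 (ctr hperf d U hU hne hε n).2 ⊆
      (stSeq hperf d U hU hne hε n).1 ∧
    ((stSeq hperf d U hU hne hε n).1 \
      Metric.closedBall (ctr hperf d U hU hne hε n).1 (ctr hperf d U hU hne hε n).2).Nonempty ∧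
    (d n ∈ (stSeq hperf d U hU hne hε n).1 → (ctr hperf d U hU hne hε n).1 = d n) :=
  (step_ex hperf (stSeq hperf d U hU hne hε n).2.1
      (stSeq hperf d U hU hne hε n).2.2.2 (d n) hε).choose_spec

lemma stSeq_succ (n : ℕ) :
    (stSeq hperf d U hU hne hε (n + 1)).1 =
      (stSeq hperf d U hU hne hε n).1 \ closure (Vfam hperf d U hU hne hε n) := rfl

lemma stSeq_zero : (stSeq hperf d U hU hne hε 0).1 = U := rfl

end Construction

section Props
variable {X : Type*} [MetricSpace X]
variable (hperf : Preperfect (univ : Set X)) (d : ℕ → X) {ε : ℝ}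
variable (U : Set X) (hU : IsOpen U) (hne : U.Nonempty) (hε : 0 < ε)

lemma Vfam_isOpen (n : ℕ) : IsOpen (Vfam hperf d U hU hne hε n) := Metric.isOpen_ball

lemma Vfam_nonempty (n : ℕ) : (Vfam hperf d U hU hne hε n).Nonempty :=
  ⟨_, Metric.mem_ball_self (ctr_spec hperf d U hU hne hε n).1⟩

lemma Vfam_closure_subset (n : ℕ) :
    closure (Vfam hperf d U hU hne hε n) ⊆ (stSeq hperf d U hU hne hε n).1 :=
  Metric.closure_ball_subset_closedBall.trans (ctr_spec hperf d U hU hne hε n).2.2.1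

lemma Vfam_closure_subset_U (n : ℕ) : closure (Vfam hperf d U hU hne hε n) ⊆ U :=
  (Vfam_closure_subset hperf d U hU hne hε n).trans (stSeq hperf d U hU hne hε n).2.2.1

lemma Vfam_diam (n : ℕ) :
    EMetric.diam (Vfam hperf d U hU hne hε n) ≤ 2 * ENNReal.ofReal ε := by
  unfold Vfam
  rw [← Metric.emetric_ball]
  refine le_trans EMetric.diam_ball ?_
  exact mul_le_mul_right (ENNReal.ofReal_le_ofReal (ctr_spec hperf d U hU hne hε n).2.1) 2

lemma stSeq_anti : Antitone (fun n => (stSeq hperf d U hU hne hε n).1) := by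
  apply antitone_nat_of_succ_le
  intro n
  rw [stSeq_succ]
  exact diff_subset

lemma Vfam_subset_stSeq (n : ℕ) :
    Vfam hperf d U hU hne hε n ⊆ (stSeq hperf d U hU hne hε n).1 :=
  subset_closure.trans (Vfam_closure_subset hperf d U hU hne hε n)

lemma Vfam_disjoint : Pairwise fun i j => Disjoint (Vfam hperf d U hU hne hε i)
    (Vfam hperf d U hU hne hε j) := by
  have key : ∀ k n, k < n → Disjoint (Vfam hperf d U hU hne hε k) (Vfam hperf d U hU hne hε n) := by
    intro k n hkn
    rw [Set.disjoint_right]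
    intro x hxn hxk
    have h1 : x ∈ (stSeq hperf d U hU hne hε (k+1)).1 :=
      stSeq_anti hperf d U hU hne hε hkn (Vfam_subset_stSeq hperf d U hU hne hε n hxn)
    rw [stSeq_succ] at h1
    exact h1.2 (subset_closure hxk)
  intro i j hij
  rcases lt_or_gt_of_ne hij with h | h
  · exact key _ _ h
  · exact (key _ _ h).symm

lemma Vfam_dense (hd : DenseRange d) :
    U ⊆ closure (⋃ n, Vfam hperf d U hU hne hε n) := by
  have not_in : ∀ n, ∀ x ∈ U, x ∉ (stSeq hperf d U hU hne hε n).1 →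
      ∃ k, x ∈ closure (Vfam hperf d U hU hne hε k) := by
    intro n
    induction n with
    | zero => intro x hx hx0; exact absurd hx hx0
    | succ m ih =>
      intro x hx hxm
      by_cases hcase : x ∈ (stSeq hperf d U hU hne hε m).1
      · refine ⟨m, ?_⟩
        by_contra hcl
        exact hxm (by rw [stSeq_succ]; exact ⟨hcase, hcl⟩)
      · exact ih x hx hcase
  intro x hx
  rw [mem_closure_iff]
  intro o ho hxo
  obtain ⟨n, hdn⟩ := hd.exists_mem_open (ho.inter hU) ⟨x, hxo, hx⟩
  by_cases hcase : d n ∈ (stSeq hperf d U hU hne hε n).1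
  · refine ⟨d n, hdn.1, mem_iUnion.mpr ⟨n, ?_⟩⟩
    have := (ctr_spec hperf d U hU hne hε n).2.2.2.2 hcase
    rw [Vfam, ← this]
    exact Metric.mem_ball_self (ctr_spec hperf d U hU hne hε n).1
  · obtain ⟨k, hk⟩ := not_in n (d n) hdn.2 hcase
    rw [mem_closure_iff] at hk
    obtain ⟨y, hy1, hy2⟩ := hk o ho hdn.1
    exact ⟨y, hy1, mem_iUnion.mpr ⟨k, hy2⟩⟩

end Props

section Scheme
variable {X : Type*} [MetricSpace X] [Nonempty X]

/-- the Lusin scheme of open sets -/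
noncomputable def schemeAux (hperf : Preperfect (univ : Set X)) (d : ℕ → X) :
    List ℕ → {O : Set X // IsOpen O ∧ O.Nonempty}
  | [] => ⟨univ, isOpen_univ, univ_nonempty⟩
  | (i :: l) =>
      ⟨Vfam hperf d (schemeAux hperf d l).1 (schemeAux hperf d l).2.1
          (schemeAux hperf d l).2.2
          (pow_pos (by norm_num : (0:ℝ) < 1/2) (l.length + 1)) i,
        Vfam_isOpen _ _ _ _ _ _ i, Vfam_nonempty _ _ _ _ _ _ i⟩

variable (hperf : Preperfect (univ : Set X)) (d : ℕ → X)

/-- the scheme as a set-valued map -/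
noncomputable def schA (hperf : Preperfect (univ : Set X)) (d : ℕ → X) : List ℕ → Set X :=
  fun l => (schemeAux hperf d l).1

lemma schA_nil : schA hperf d [] = univ := rfl

lemma schA_cons (i : ℕ) (l : List ℕ) :
    schA hperf d (i :: l) = Vfam hperf d (schA hperf d l) (schemeAux hperf d l).2.1
      (schemeAux hperf d l).2.2 (pow_pos (by norm_num : (0:ℝ) < 1/2) (l.length + 1)) i := rfl

lemma schA_isOpen (l : List ℕ) : IsOpen (schA hperf d l) := (schemeAux hperf d l).2.1

lemma schA_nonempty (l : List ℕ) : (schA hperf d l).Nonempty := (schemeAux hperf d l).2.2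

lemma schA_closure_subset (i : ℕ) (l : List ℕ) :
    closure (schA hperf d (i :: l)) ⊆ schA hperf d l := by
  rw [schA_cons]
  exact Vfam_closure_subset_U _ _ _ _ _ _ i

lemma schA_closureAntitone : CantorScheme.ClosureAntitone (schA hperf d) :=
  fun l i => schA_closure_subset hperf d i l

lemma schA_disjoint : CantorScheme.Disjoint (schA hperf d) := by
  intro l i j hij
  rw [schA_cons, schA_cons]
  exact Vfam_disjoint _ _ _ _ _ _ hij

lemma schA_diam (i : ℕ) (l : List ℕ) :
    EMetric.diam (schA hperf d (i :: l)) ≤ ENNReal.ofReal ((1/2) ^ l.length) := by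
  rw [schA_cons]
  refine (Vfam_diam _ _ _ _ _ _ i).trans ?_
  rw [← ENNReal.ofReal_ofNat, ← ENNReal.ofReal_mul (by norm_num : (0:ℝ) ≤ 2)]
  apply ENNReal.ofReal_le_ofReal
  rw [pow_succ]
  ring_nf
  exact le_refl _

lemma schA_dense (hd : DenseRange d) (l : List ℕ) :
    schA hperf d l ⊆ closure (⋃ i, schA hperf d (i :: l)) := by
  have := Vfam_dense hperf d (schA hperf d l) (schemeAux hperf d l).2.1
      (schemeAux hperf d l).2.2 (pow_pos (by norm_num : (0:ℝ) < 1/2) (l.length + 1)) hd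
  convert this using 2
  rfl

lemma schA_vanishingDiam : CantorScheme.VanishingDiam (schA hperf d) := by
  intro x
  rw [ENNReal.tendsto_atTop_zero]
  intro ε hε
  have h1 : ENNReal.ofReal (1/2) < 1 := ENNReal.ofReal_lt_one.mpr (by norm_num)
  have h2 := ENNReal.tendsto_pow_atTop_nhds_zero_of_lt_one h1
  rw [ENNReal.tendsto_atTop_zero] at h2
  obtain ⟨N, hN⟩ := h2 ε hε
  refine ⟨N + 1, fun n hn => ?_⟩
  obtain ⟨m, rfl⟩ : ∃ m, n = m + 1 := ⟨n - 1, (Nat.succ_pred_eq_of_pos (by omega)).symm⟩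
  rw [PiNat.res_succ]
  refine le_trans ?_ (hN m (by omega))
  have := schA_diam hperf d (x m) (PiNat.res x m)
  rwa [PiNat.res_length, ENNReal.ofReal_pow (by norm_num : (0:ℝ) ≤ 1/2)] at this

lemma schA_level_disjoint : ∀ n (s t : List ℕ), s.length = n → t.length = n → s ≠ t →
    Disjoint (schA hperf d s) (schA hperf d t) := by
  intro n
  induction n with
  | zero =>
    intro s t hs ht hst
    rw [List.length_eq_zero_iff] at hs ht
    exact absurd (hs.trans ht.symm) hst
  | succ m ih =>
    rintro (_ | ⟨a, s'⟩) t hs ht hst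
    · simp at hs
    rcases t with _ | ⟨b, t'⟩
    · simp at ht
    simp only [List.length_cons, Nat.succ.injEq] at hs ht
    by_cases hstt : s' = t'
    · subst hstt
      have hab : a ≠ b := fun h => hst (by rw [h])
      exact schA_disjoint hperf d s' hab
    · have h1 : schA hperf d (a :: s') ⊆ schA hperf d s' :=
        (schA_closureAntitone hperf d).antitone s' a
      have h2 : schA hperf d (b :: t') ⊆ schA hperf d t' :=
        (schA_closureAntitone hperf d).antitone t' b
      exact ((ih s' t' hs ht hstt).mono h1 h2)

end Scheme

lemma res_exists : ∀ s : List ℕ, ∃ x : ℕ → ℕ, PiNat.res x s.length = s := by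
  intro s
  induction s with
  | nil => exact ⟨fun _ => 0, rfl⟩
  | cons a t ih =>
    obtain ⟨x, hx⟩ := ih
    refine ⟨Function.update x t.length a, ?_⟩
    have h1 : PiNat.res (Function.update x t.length a) t.length = PiNat.res x t.length :=
      PiNat.res_eq_res.mpr (fun m hm => Function.update_of_ne (Nat.ne_of_lt hm) _ _)
    rw [List.length_cons, PiNat.res_succ, Function.update_self, h1, hx]

section Density
variable {X : Type*} [MetricSpace X] [Nonempty X]
variable (hperf : Preperfect (univ : Set X)) (d : ℕ → X)

lemma schA_level_dense (hd : DenseRange d) (n : ℕ) :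
    Dense (⋃ y : ℕ → ℕ, schA hperf d (PiNat.res y n)) := by
  induction n with
  | zero =>
    simp only [PiNat.res_zero]
    rw [schA_nil, Set.iUnion_const]
    exact dense_univ
  | succ m ih =>
    rw [dense_iff_inter_open]
    intro o ho hone
    obtain ⟨z₀, hz₀o, hz₀U⟩ := (dense_iff_inter_open.mp ih) o ho hone
    obtain ⟨y, hy⟩ := mem_iUnion.mp hz₀U
    have hcl := schA_dense hperf d hd (PiNat.res y m) hy
    rw [mem_closure_iff] at hcl
    obtain ⟨w, hwo, hwU⟩ := hcl o ho hz₀o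
    obtain ⟨i, hwi⟩ := mem_iUnion.mp hwU
    refine ⟨w, hwo, mem_iUnion.mpr ⟨Function.update y m i, ?_⟩⟩
    rw [PiNat.res_succ, Function.update_self]
    have : PiNat.res (Function.update y m i) m = PiNat.res y m := by
      apply PiNat.res_eq_res.mpr
      intro k hk
      exact Function.update_of_ne (Nat.ne_of_lt hk) _ _
    rw [this]
    exact hwi

end Density

lemma exists_dense_embedding {X : Type*} [MetricSpace X] [CompleteSpace X]
    [TopologicalSpace.SeparableSpace X] [Nonempty X]
    (hperf : Preperfect (univ : Set X)) :
    ∃ g : (ℕ → ℕ) → X, IsEmbedding g ∧ Dense (Set.range g) := by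
  set d := TopologicalSpace.denseSeq X with hd_def
  have hd : DenseRange d := TopologicalSpace.denseRange_denseSeq X
  set A := schA hperf d with hA_def
  have htot : (CantorScheme.inducedMap A).1 = univ :=
    CantorScheme.ClosureAntitone.map_of_vanishingDiam (schA_vanishingDiam hperf d)
      (schA_closureAntitone hperf d) (schA_nonempty hperf d)
  set g : (ℕ → ℕ) → X := fun x => (CantorScheme.inducedMap A).2 ⟨x, by rw [htot]; trivial⟩
    with hg_def
  have hmem : ∀ (x : ℕ → ℕ) (n : ℕ), g x ∈ A (PiNat.res x n) := fun x n =>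
    CantorScheme.map_mem _ n
  have hginj : Function.Injective g := by
    intro x y hxy
    have := (schA_disjoint hperf d).map_injective (a₁ := ⟨x, by rw [htot]; trivial⟩)
      (a₂ := ⟨y, by rw [htot]; trivial⟩) hxy
    exact congrArg Subtype.val this
  have hgcont : Continuous g :=
    ((schA_vanishingDiam hperf d).map_continuous).comp (Continuous.subtype_mk continuous_id _)
  -- image of cylinders
  have hcyl : ∀ (x : ℕ → ℕ) (n : ℕ),
      g '' PiNat.cylinder x n = Set.range g ∩ A (PiNat.res x n) := by
    intro x n
    ext z
    constructor
    · rintro ⟨y, hy, rfl⟩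
      rw [PiNat.cylinder_eq_res, mem_setOf_eq] at hy
      exact ⟨mem_range_self y, by rw [← hy]; exact hmem y n⟩
    · rintro ⟨⟨y, rfl⟩, hz⟩
      refine ⟨y, ?_, rfl⟩
      rw [PiNat.cylinder_eq_res, mem_setOf_eq]
      by_contra hres
      have hdj := schA_level_disjoint hperf d n (PiNat.res y n) (PiNat.res x n)
        (PiNat.res_length y n) (PiNat.res_length x n) hres
      exact (Set.disjoint_left.mp hdj) (hmem y n) hz
  -- open onto range
  have hopen : ∀ W : Set (ℕ → ℕ), IsOpen W → ∃ O : Set X, IsOpen O ∧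
      g '' W = Set.range g ∩ O := by
    intro W hW
    have hbasis := PiNat.isTopologicalBasis_cylinders (fun _ : ℕ => ℕ)
    have hch : ∀ x : W, ∃ n : ℕ, PiNat.cylinder (x : ℕ → ℕ) n ⊆ W := by
      rintro ⟨x, hx⟩
      obtain ⟨s, hsmem, hxs, hsub⟩ := hbasis.exists_subset_of_mem_open hx hW
      obtain ⟨y, m, rfl⟩ := hsmem
      refine ⟨m, ?_⟩
      rwa [PiNat.mem_cylinder_iff_eq.mp hxs]
    choose nn hnn using hch
    refine ⟨⋃ x : W, A (PiNat.res (x : ℕ → ℕ) (nn x)),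
      isOpen_iUnion (fun x => schA_isOpen hperf d _), ?_⟩
    ext z
    constructor
    · rintro ⟨y, hy, rfl⟩
      exact ⟨mem_range_self y, mem_iUnion.mpr ⟨⟨y, hy⟩, hmem y (nn ⟨y, hy⟩)⟩⟩
    · rintro ⟨⟨y, rfl⟩, hz⟩
      obtain ⟨x, hxA⟩ := mem_iUnion.mp hz
      have : g y ∈ g '' PiNat.cylinder (x : ℕ → ℕ) (nn x) := by
        rw [hcyl]
        exact ⟨mem_range_self y, hxA⟩
      obtain ⟨y', hy', hyy⟩ := this
      exact ⟨y', hnn x hy', hyy⟩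
  -- embedding
  have hcoe : ⇑(Equiv.ofInjective g hginj) = Set.rangeFactorization g := by
    funext x
    apply Subtype.ext
    simp [Set.rangeFactorization]
  have hrfcont : Continuous (Set.rangeFactorization g) :=
    Continuous.subtype_mk hgcont _
  have hrfopen : IsOpenMap (Set.rangeFactorization g) := by
    intro W hW
    obtain ⟨O, hO, hgO⟩ := hopen W hW
    rw [isOpen_induced_iff]
    refine ⟨O, hO, ?_⟩
    ext u
    simp only [mem_preimage]
    constructor
    · intro huO
      have : (u : X) ∈ g '' W := by rw [hgO]; exact ⟨u.2, huO⟩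
      obtain ⟨w, hw, hwu⟩ := this
      exact ⟨w, hw, Subtype.ext hwu⟩
    · rintro ⟨w, hw, rfl⟩
      have : g w ∈ Set.range g ∩ O := by rw [← hgO]; exact ⟨w, hw, rfl⟩
      exact this.2
  let homeo : (ℕ → ℕ) ≃ₜ Set.range g :=
    Equiv.toHomeomorphOfContinuousOpen (Equiv.ofInjective g hginj)
      (by rw [hcoe]; exact hrfcont) (by rw [hcoe]; exact hrfopen)
  have hcoe2 : ⇑homeo = Set.rangeFactorization g := by
    rw [show ⇑homeo = ⇑(Equiv.ofInjective g hginj) from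
      Equiv.toHomeomorphOfContinuousOpen_apply _ _ _, hcoe]
  have hemb : IsEmbedding g := by
    have hg2 : g = Subtype.val ∘ ⇑homeo := by
      funext x
      rw [Function.comp_apply, hcoe2]
      rfl
    rw [hg2]
    exact IsEmbedding.subtypeVal.comp homeo.isEmbedding
  -- density
  refine ⟨g, hemb, ?_⟩
  rw [dense_iff_inter_open]
  intro o ho hone
  obtain ⟨x₀, hx₀⟩ := hone
  obtain ⟨δ, hδ, hball⟩ := Metric.isOpen_iff.mp ho x₀ hx₀
  obtain ⟨m, hm⟩ := exists_pow_lt_of_lt_one (by linarith : (0:ℝ) < δ/2) (by norm_num : (1/2 : ℝ) < 1)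
  have hlevel := schA_level_dense hperf d hd (m + 1)
  obtain ⟨z, hz1, hz2⟩ := (dense_iff_inter_open.mp hlevel) (Metric.ball x₀ (δ/2))
    Metric.isOpen_ball ⟨x₀, Metric.mem_ball_self (by linarith)⟩
  obtain ⟨y, hy⟩ := mem_iUnion.mp hz2
  obtain ⟨x', hx'⟩ := res_exists (PiNat.res y (m + 1))
  rw [PiNat.res_length] at hx'
  have hgx' : g x' ∈ A (PiNat.res y (m + 1)) := by rw [← hx']; exact hmem x' (m + 1)
  have hdiam : EMetric.diam (A (PiNat.res y (m + 1))) ≤ ENNReal.ofReal ((1/2) ^ m) := by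
    have := schA_diam hperf d (y m) (PiNat.res y m)
    rwa [PiNat.res_length, ← PiNat.res_succ] at this
  have hdist1 : dist (g x') z ≤ (1/2) ^ m := by
    have hedist := EMetric.edist_le_diam_of_mem hgx' hy
    have := hedist.trans hdiam
    rw [edist_dist] at this
    exact (ENNReal.ofReal_le_ofReal_iff (by positivity)).mp this
  have hdistz : dist z x₀ < δ / 2 := Metric.mem_ball.mp hz1
  have : dist (g x') x₀ < δ := by
    calc dist (g x') x₀ ≤ dist (g x') z + dist z x₀ := dist_triangle _ _ _
    _ < (1/2) ^ m + δ/2 := by linarith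
    _ < δ/2 + δ/2 := by linarith
    _ = δ := by ring
  exact ⟨g x', hball (Metric.mem_ball.mpr this), mem_range_self x'⟩

section Final

lemma meagre_range_iff {Z Y : Type*} [TopologicalSpace Z] [TopologicalSpace Y]
    {f : Z → Y} (hf : IsEmbedding f) (S : Set Z) :
    IsMeagre S ↔ IsMeagre (Subtype.val ⁻¹' (f '' S) : Set (Set.range f)) := by
  set e := hf.toHomeomorph with he
  have himg : e '' S = (Subtype.val ⁻¹' (f '' S) : Set (Set.range f)) := by
    ext u
    constructor
    · rintro ⟨z, hz, rfl⟩
      exact ⟨z, hz, rfl⟩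
    · rintro ⟨z, hz, hzu⟩
      exact ⟨z, hz, Subtype.ext hzu⟩
  constructor
  · intro h
    rw [← himg]
    exact meagre_image_homeomorph _ h
  · intro h
    rw [← himg] at h
    have := meagre_image_homeomorph e.symm h
    rwa [show ⇑e.symm = ⇑e.toEquiv.symm from rfl, show ⇑e = ⇑e.toEquiv from rfl,
      Equiv.symm_image_image] at this

theorem stmt_10 (X : Type*) [TopologicalSpace X] [PolishSpace X] [Nonempty X]
    (hperf : Preperfect (Set.univ : Set X)) (h : PerfectProp X) :
    PerfectProp (ℕ → ℕ) := by
  letI := TopologicalSpace.upgradeIsCompletelyMetrizable X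
  obtain ⟨g, hgemb, hgdense⟩ := exists_dense_embedding hperf
  intro A hA
  -- the image of A is nonmeager in X
  have hA' : ¬ IsMeagre (g '' A) := by
    intro hm
    exact hA ((meagre_range_iff hgemb A).mpr (meagre_preimage_val_of_dense hgdense hm))
  obtain ⟨P, hPnwd, hPperf, hPne, hPnm⟩ := h (g '' A) hA'
  -- the preimage of P
  set Q : Set (ℕ → ℕ) := g ⁻¹' P with hQdef
  have hQclosed : IsClosed Q := hPperf.closed.preimage hgemb.continuous
  have hQnwd : IsNowhereDense Q := by
    rw [hQclosed.isNowhereDense_iff, Set.eq_empty_iff_forall_notMem]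
    intro x hx
    set e := hgemb.toHomeomorph with he
    have hW' : IsOpen (e '' interior Q) := e.isOpenMap _ isOpen_interior
    obtain ⟨O, hOopen, hOeq⟩ := isOpen_induced_iff.mp hW'
    have himg : O ∩ Set.range g = Subtype.val '' (e '' interior Q) := by
      rw [← hOeq]
      ext z
      constructor
      · rintro ⟨hzO, hzG⟩
        exact ⟨⟨z, hzG⟩, hzO, rfl⟩
      · rintro ⟨u, hu, rfl⟩
        exact ⟨hu, u.2⟩
    have hsubP : Subtype.val '' (e '' interior Q) ⊆ P := by
      rintro z ⟨u, ⟨w, hw, rfl⟩, rfl⟩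
      have hwQ : w ∈ Q := interior_subset hw
      exact hwQ
    have hne' : (O ∩ Set.range g).Nonempty := by
      rw [himg]
      exact ⟨g x, e x, Set.mem_image_of_mem _ hx, rfl⟩
    have hOP : O ⊆ P := by
      have h1 : O ⊆ closure (O ∩ Set.range g) := hgdense.open_subset_closure_inter hOopen
      have h2 : closure (O ∩ Set.range g) ⊆ closure P := by
        apply closure_mono
        rw [himg]
        exact hsubP
      rw [hPperf.closed.closure_eq] at h2
      exact h1.trans h2
    have : (interior P).Nonempty := by
      obtain ⟨z, hz⟩ := hne'
      exact ⟨z, interior_maximal hOP hOopen hz.1⟩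
    rw [IsNowhereDense, hPperf.closed.closure_eq] at hPnwd
    rw [hPnwd] at this
    exact Set.not_nonempty_empty this
  -- Cantor-Bendixson decomposition
  obtain ⟨C, K, hCcnt, hKperf, hQeq⟩ := exists_countable_union_perfect_of_isClosed hQclosed
  have hKQ : K ⊆ Q := hQeq ▸ Set.subset_union_right
  have hKnwd : IsNowhereDense K := by
    rw [hKperf.closed.isNowhereDense_iff, Set.eq_empty_iff_forall_notMem]
    intro x hx
    rw [hQclosed.isNowhereDense_iff] at hQnwd
    have := interior_mono hKQ hx
    rw [hQnwd] at this
    exact this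
  have hgKP : g '' K ⊆ P := (Set.image_mono (f := g) hKQ).trans (Set.image_preimage_subset g P)
  -- the key nonmeagerness claim
  have hmain : ¬ IsMeagre (Subtype.val ⁻¹' A : Set K) := by
    intro hKm
    apply hPnm
    have hi : IsMeagre (Subtype.val ⁻¹' (g '' (A ∩ C)) : Set P) :=
      meagre_preimage_countable hPperf ((hCcnt.mono Set.inter_subset_right).image g)
    have hKm' : IsMeagre (Subtype.val ⁻¹' (A ∩ K) : Set K) := by
      have heq : (Subtype.val ⁻¹' (A ∩ K) : Set K) = Subtype.val ⁻¹' A := by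
        ext u
        simp [u.2]
      rw [heq]
      exact hKm
    have hii0 : IsMeagre (Subtype.val ⁻¹' (g '' (A ∩ K)) : Set (g '' K : Set X)) :=
      (meagre_emb_iff hgemb K (A ∩ K)).mp hKm'
    have hii : IsMeagre (Subtype.val ⁻¹' (g '' (A ∩ K)) : Set P) :=
      meagre_up (Set.image_mono (f := g) Set.inter_subset_right) hgKP hii0
    have hunion : IsMeagre ((Subtype.val ⁻¹' (g '' (A ∩ K)) ∪
        Subtype.val ⁻¹' (g '' (A ∩ C))) : Set P) := by
      rw [IsMeagre, Set.compl_union]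
      exact Filter.inter_mem hii hi
    refine hunion.mono ?_
    rintro u hu
    obtain ⟨a, ha, hau⟩ := hu
    have haQ : a ∈ Q := by
      rw [hQdef, Set.mem_preimage, hau]
      exact u.2
    rw [hQeq] at haQ
    rcases haQ with haC | haK
    · exact Or.inr ⟨a, ⟨ha, haC⟩, hau⟩
    · exact Or.inl ⟨a, ⟨ha, haK⟩, hau⟩
  have hKne : K.Nonempty := by
    rcases Set.eq_empty_or_nonempty K with rfl | hne
    · exfalso
      apply hmain
      rw [Set.eq_empty_of_isEmpty (Subtype.val ⁻¹' A : Set (∅ : Set (ℕ → ℕ)))]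
      exact IsMeagre.empty
    · exact hne
  exact ⟨K, hKnwd, hKperf, hKne, hmain⟩

end Final
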